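/- Let 𝕋 = {z ∈ ℂ : |z| = 1} be the unit circle and let S be the linear span of the constant function 1 and the identity function z ↦ z inside C(𝕋). Then the Choquet boundary of S equals all of 𝕋. -/

import Mathlib

lemma conv_one (a b : ℝ) (ha : 0 < a) (hb : 0 < b) (hab : a + b = 1)
    (u v : ℂ) (hu : ‖u‖ ≤ 1) (hv : ‖v‖ ≤ 1) (h : a • u + b • v = 1) :
    u = 1 ∧ v = 1 := by
  have hre : a * u.re + b * v.re = 1 := by
    have := congrArg Complex.re h
    simpa [Complex.add_re, Complex.smul_re] using this
  have him : a * u.im + b * v.im = 0 := by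
    have := congrArg Complex.im h
    simpa [Complex.add_im, Complex.smul_im] using this
  have hur : u.re ≤ 1 := le_trans (Complex.re_le_norm u) hu
  have hvr : v.re ≤ 1 := le_trans (Complex.re_le_norm v) hv
  have hure : u.re = 1 := by nlinarith
  have hvre : v.re = 1 := by nlinarith
  have hu2 : u.re ^ 2 + u.im ^ 2 ≤ 1 := by
    have := Complex.sq_norm u
    rw [Complex.normSq_apply] at this
    nlinarith [norm_nonneg u, hu]
  have hv2 : v.re ^ 2 + v.im ^ 2 ≤ 1 := by
    have := Complex.sq_norm v
    rw [Complex.normSq_apply] at this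
    nlinarith [norm_nonneg v, hv]
  constructor
  · refine Complex.ext hure ?_; rw [Complex.one_im]; nlinarith
  · refine Complex.ext hvre ?_; rw [Complex.one_im]; nlinarith

/-- The evaluation functional at a point, as an element of the dual of a subspace of `C(X, ℂ)`. -/
noncomputable def evalDual {X : Type*} [TopologicalSpace X] [CompactSpace X]
    (S : Submodule ℂ C(X, ℂ)) (x : X) : StrongDual ℂ ↥S :=
  LinearMap.mkContinuous
    { toFun := fun f => (f : C(X, ℂ)) x
      map_add' := fun f g => rfl
      map_smul' := fun c f => rfl }
    1
    (fun f => by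
      exact le_of_le_of_eq (ContinuousMap.norm_coe_le_norm (f : C(X, ℂ)) x) (one_mul _).symm)

/-- The Choquet boundary of a subspace `S` of `C(X, ℂ)`: the set of points `x ∈ X` such that
the evaluation functional at `x` is an extreme point of the closed unit ball of the dual of `S`. -/
noncomputable def ChoquetBoundary {X : Type*} [TopologicalSpace X] [CompactSpace X]
    (S : Submodule ℂ C(X, ℂ)) : Set X :=
  {x | evalDual S x ∈ Set.extremePoints ℝ (Metric.closedBall (0 : StrongDual ℂ ↥S) 1)}

set_option maxHeartbeats 1000000

/-- The Choquet boundary of `span {1, z} ⊆ C(𝕋)` is all of the unit circle `𝕋`. -/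
theorem choquet_boundary_circle_span :
    ChoquetBoundary (Submodule.span ℂ
      ({1, ⟨fun z => (z : ℂ), continuous_subtype_val⟩} :
          Set C(↥(Metric.sphere (0 : ℂ) 1), ℂ))) = Set.univ := by
  set T := ↥(Metric.sphere (0 : ℂ) 1)
  set idz : C(T, ℂ) := ⟨fun z => (z : ℂ), continuous_subtype_val⟩ with hidz
  set S : Submodule ℂ C(T, ℂ) := Submodule.span ℂ {1, idz} with hS
  have hnorm_pt : ∀ y : T, ‖(y : ℂ)‖ = 1 := by
    intro y
    have := y.2
    simpa using (mem_sphere_zero_iff_norm.mp this)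
  have honeS : (1 : C(T, ℂ)) ∈ S := Submodule.subset_span (by simp)
  have hzS : idz ∈ S := Submodule.subset_span (by simp)
  ext x
  simp only [Set.mem_univ, iff_true, ChoquetBoundary, Set.mem_setOf_eq]
  rw [mem_extremePoints]
  constructor
  · rw [Metric.mem_closedBall]; refine (dist_zero_right (evalDual S x)).trans_le ?_
    refine ContinuousLinearMap.opNorm_le_bound _ zero_le_one (fun f => ?_)
    rw [one_mul]
    exact ContinuousMap.norm_coe_le_norm (f : C(T, ℂ)) x
  · intro φ hφ ψ hψ hseg
    rw [Metric.mem_closedBall] at hφ hψ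
    replace hφ := (dist_zero_right φ) ▸ hφ
    replace hψ := (dist_zero_right ψ) ▸ hψ
    obtain ⟨a, b, ha, hb, hab, habv⟩ := hseg
    -- the special function f = (1 + conj x * z)/2
    set c : ℂ := (starRingEnd ℂ) (x : ℂ) / 2 with hc
    have hcx : ‖c‖ = 1 / 2 := by
      rw [hc, norm_div]
      simp [hnorm_pt x]
    have hxx : (starRingEnd ℂ) (x : ℂ) * (x : ℂ) = 1 := by
      rw [Complex.conj_mul']
      norm_cast
      simpa [Complex.sq_norm, Complex.normSq_eq_norm_sq] using by
        have := hnorm_pt x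
        nlinarith [this]
    set oneS : ↥S := ⟨1, honeS⟩ with honeS'
    set zS : ↥S := ⟨idz, hzS⟩ with hzS'
    set fS : ↥S := ((1 : ℂ)/2) • oneS + c • zS with hfS
    have hfS_coe : (fS : C(T, ℂ)) = ((1 : ℂ)/2) • (1 : C(T, ℂ)) + c • idz := rfl
    have hfS_norm : ‖fS‖ ≤ 1 := by
      show ‖(fS : C(T, ℂ))‖ ≤ 1
      rw [ContinuousMap.norm_le _ zero_le_one]
      intro y
      rw [hfS_coe]
      calc ‖(((1:ℂ)/2) • (1 : C(T, ℂ)) + c • idz) y‖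
          ≤ ‖(((1:ℂ)/2) • (1 : C(T, ℂ))) y‖ + ‖(c • idz) y‖ := by
            rw [ContinuousMap.add_apply]; exact norm_add_le _ _
        _ ≤ 1 := by
            simp only [ContinuousMap.smul_apply, ContinuousMap.one_apply, smul_eq_mul,
              norm_mul, hcx]
            rw [hidz]
            simp only [ContinuousMap.coe_mk, hnorm_pt y]
            norm_num
    have heval : evalDual S x fS = 1 := by
      show (fS : C(T, ℂ)) x = 1
      rw [hfS_coe]
      simp only [ContinuousMap.add_apply, ContinuousMap.smul_apply, ContinuousMap.one_apply,
        smul_eq_mul, mul_one, hidz, ContinuousMap.coe_mk, hc]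
      field_simp
      rw [hxx]
      ring
    -- step 1: φ fS = 1 and ψ fS = 1
    have happ : a • (φ fS) + b • (ψ fS) = 1 := by
      have := congrArg (fun (ρ : StrongDual ℂ ↥S) => ρ fS) habv
      simpa [heval] using this
    have hφf : ‖φ fS‖ ≤ 1 := by
      calc ‖φ fS‖ ≤ ‖φ‖ * ‖fS‖ := φ.le_opNorm fS
        _ ≤ 1 * 1 := mul_le_mul hφ hfS_norm (norm_nonneg _) zero_le_one
        _ = 1 := one_mul 1
    have hψf : ‖ψ fS‖ ≤ 1 := by
      calc ‖ψ fS‖ ≤ ‖ψ‖ * ‖fS‖ := ψ.le_opNorm fS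
        _ ≤ 1 * 1 := mul_le_mul hψ hfS_norm (norm_nonneg _) zero_le_one
        _ = 1 := one_mul 1
    obtain ⟨hφ1, hψ1⟩ := conv_one a b ha hb hab _ _ hφf hψf happ
    -- step 2: each of φ, ψ agrees with δ_x on 1 and z
    have key : ∀ ρ : StrongDual ℂ ↥S, ‖ρ‖ ≤ 1 → ρ fS = 1 →
        ρ = evalDual S x := by
      intro ρ hρ hρf
      have hexp : ((1:ℝ)/2) • (ρ oneS) + ((1:ℝ)/2) • ((2 * c) * ρ zS) = 1 := by
        rw [hfS] at hρf
        rw [map_add, map_smul, map_smul] at hρf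
        simp only [smul_eq_mul] at hρf
        rw [Complex.real_smul, Complex.real_smul]
        push_cast
        linear_combination hρf
      have hone_norm : ‖ρ oneS‖ ≤ 1 := by
        calc ‖ρ oneS‖ ≤ ‖ρ‖ * ‖oneS‖ := ρ.le_opNorm oneS
          _ ≤ 1 * 1 := by
              refine mul_le_mul hρ ?_ (norm_nonneg _) zero_le_one
              show ‖(oneS : C(T, ℂ))‖ ≤ 1
              rw [ContinuousMap.norm_le _ zero_le_one]
              intro y; simp [honeS']
          _ = 1 := one_mul 1
      have hz_norm : ‖(2 * c) * ρ zS‖ ≤ 1 := by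
        rw [norm_mul, norm_mul]
        have h2c : ‖(2:ℂ)‖ * ‖c‖ = 1 := by
          rw [hcx]; simp
        rw [h2c, one_mul]
        calc ‖ρ zS‖ ≤ ‖ρ‖ * ‖zS‖ := ρ.le_opNorm zS
          _ ≤ 1 * 1 := by
              refine mul_le_mul hρ ?_ (norm_nonneg _) zero_le_one
              show ‖(zS : C(T, ℂ))‖ ≤ 1
              rw [ContinuousMap.norm_le _ zero_le_one]
              intro y
              show ‖(y : ℂ)‖ ≤ 1
              exact le_of_eq (hnorm_pt y)
          _ = 1 := one_mul 1
      obtain ⟨hone, hz⟩ := conv_one ((1:ℝ)/2) ((1:ℝ)/2) (by norm_num) (by norm_num)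
        (by norm_num) _ _ hone_norm hz_norm hexp
      have hzval : ρ zS = (x : ℂ) := by
        have h2c : (2 : ℂ) * c = (starRingEnd ℂ) (x : ℂ) := by rw [hc]; ring
        rw [h2c] at hz
        have := congrArg (fun w => (x : ℂ) * w) hz
        simp only [mul_one] at this
        rw [← mul_assoc, mul_comm (x : ℂ) _, hxx, one_mul] at this
        exact this
      -- now conclude ρ = evalDual S x on the span
      apply ContinuousLinearMap.ext
      intro f
      obtain ⟨u, v, huv⟩ := Submodule.mem_span_pair.mp f.2
      have hf : f = u • oneS + v • zS := by
        apply Subtype.ext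
        rw [← huv]
        rfl
      rw [hf, map_add, map_smul, map_smul, map_add, map_smul, map_smul,
        hone, hzval]
      have e1 : evalDual S x oneS = 1 := by
        show (1 : C(T, ℂ)) x = 1
        simp
      have e2 : evalDual S x zS = (x : ℂ) := rfl
      rw [e1, e2]
    exact ⟨key φ hφ hφ1, key ψ hψ hψ1⟩
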